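/- Let λ ∈ SC^(m) with main diagonal hook lengths δ_1 > δ_2 > ... > δ_d, and let λ̄ be the self-conjugate partition with main diagonal hook lengths {δ_2, ..., δ_d}. Let μ and μ̄ be the corresponding partitions of λ and λ̄ under the bijection. If δ_1 ≡ 1 mod 4, then μ̄ = (μ_2, μ_3, ..., μ_ℓ); if δ_1 ≡ 3 mod 4, then μ̄ = (μ_1 − 1, μ_2 − 1, ..., μ_ℓ − 1). -/

import Mathlib

/-- A partition, encoded as an antitone, eventually-zero function (0-indexed parts). -/
def IsPartition (l : ℕ → ℕ) : Prop := Antitone l ∧ ∃ N, l N = 0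

/-- The conjugate partition: `conj l j` is the number of rows whose length exceeds `j`. -/
noncomputable def conj (l : ℕ → ℕ) (j : ℕ) : ℕ := Set.ncard {i | j < l i}

/-- Hook length of the box in row `i`, column `j` (0-indexed): arm + leg + 1. -/
noncomputable def hookLen (l : ℕ → ℕ) (i j : ℕ) : ℕ :=
  (l i - (j + 1)) + (conj l j - (i + 1)) + 1

/-- A self-conjugate partition equals its conjugate. -/
def SelfConj (l : ℕ → ℕ) : Prop := conj l = l

/-- Side length of the Durfee square: the number of boxes on the main diagonal. -/
noncomputable def durfee (l : ℕ → ℕ) : ℕ := Set.ncard {i | i < l i}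

/-- The number of boxes of the Young diagram. -/
noncomputable def psize (l : ℕ → ℕ) : ℕ := Set.ncard {p : ℕ × ℕ | p.2 < l p.1}

/-- The disparity: (#boxes with odd hook length) - (#boxes with even hook length). -/
noncomputable def dp (l : ℕ → ℕ) : ℤ :=
  (Set.ncard {p : ℕ × ℕ | p.2 < l p.1 ∧ Odd (hookLen l p.1 p.2)} : ℤ) -
  (Set.ncard {p : ℕ × ℕ | p.2 < l p.1 ∧ Even (hookLen l p.1 p.2)} : ℤ)

/-- The set of main diagonal hook lengths. -/
def Dset (l : ℕ → ℕ) : Set ℕ := {x | ∃ i, i < l i ∧ x = hookLen l i i}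

/-- Main diagonal hook lengths congruent to 1 mod 4. -/
def D1 (l : ℕ → ℕ) : Set ℕ := {x ∈ Dset l | x % 4 = 1}

/-- Main diagonal hook lengths congruent to 3 mod 4. -/
def D3 (l : ℕ → ℕ) : Set ℕ := {x ∈ Dset l | x % 4 = 3}

/-- A `t`-core partition: no hook length is divisible by `t`. -/
def IsCore (l : ℕ → ℕ) (t : ℕ) : Prop := ∀ i j, j < l i → ¬ (t ∣ hookLen l i j)

/-- `(a,b)` (restricted to indices `< r`, `< s`) is the diagonal sequence pair of the
self-conjugate partition `l`: `D1 l = {4 a i + 1}` with `a` strictly decreasing, and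
`D3 l = {4 b j - 1}` with `b` strictly decreasing and positive. -/
def DiagPair (l : ℕ → ℕ) (r s : ℕ) (a b : ℕ → ℕ) : Prop :=
  StrictAntiOn a (Set.Iio r) ∧ StrictAntiOn b (Set.Iio s) ∧
  (∀ j, j < s → 1 ≤ b j) ∧
  D1 l = {x | ∃ i, i < r ∧ x = 4 * a i + 1} ∧
  D3 l = {x | ∃ j, j < s ∧ x = 4 * b j - 1}

/-- `μ` is the image of the diagonal sequence pair `((a),(b))` under the map `φ`:
the first `r` parts are `a i + (i+1) + s - r` (1-indexed `a_i + i + s - r`), and the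
remaining parts form the conjugate of `γ = (b 0 - s, b 1 - s + 1, …, b (s-1) - 1)`. -/
def PhiImage (r s : ℕ) (a b : ℕ → ℕ) (μ : ℕ → ℕ) : Prop :=
  (∀ i, i < r → (μ i : ℤ) = (a i : ℤ) + (i + 1) + s - r) ∧
  (∀ i, r ≤ i → μ i = Set.ncard {j | j < s ∧ i - r < b j + j - s})

/-- `μ` is the corresponding partition of the self-conjugate partition `l`
under the bijection `φ` of Cho–Huh–Sohn. -/
def Corresponds (l μ : ℕ → ℕ) : Prop :=
  ∃ r s a b, DiagPair l r s a b ∧ PhiImage r s a b μ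


lemma enumUniq : ∀ (r r' : ℕ) (f g : ℕ → ℕ),
    StrictAntiOn f (Set.Iio r) → StrictAntiOn g (Set.Iio r') →
    ({x : ℕ | ∃ i, i < r ∧ x = f i} = {x : ℕ | ∃ i, i < r' ∧ x = g i}) →
    r = r' ∧ ∀ i, i < r → f i = g i := by
  intro r
  induction r with
  | zero =>
    intro r' f g hf hg h
    refine ⟨?_, by omega⟩
    by_contra hne
    have hr' : 0 < r' := by omega
    have hmem : g 0 ∈ {x : ℕ | ∃ i, i < 0 ∧ x = f i} := by
      rw [h]; exact ⟨0, hr', rfl⟩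
    obtain ⟨i, hi, _⟩ := hmem
    omega
  | succ r ih =>
    intro r' f g hf hg h
    have hf0 : f 0 ∈ {x : ℕ | ∃ i, i < r' ∧ x = g i} := by
      rw [← h]; exact ⟨0, by omega, rfl⟩
    obtain ⟨i0, hi0, hf0e⟩ := hf0
    have hr' : 0 < r' := by omega
    have hg0 : g 0 ∈ {x : ℕ | ∃ i, i < r + 1 ∧ x = f i} := by
      rw [h]; exact ⟨0, hr', rfl⟩
    obtain ⟨j0, hj0, hg0e⟩ := hg0
    have hgle : g i0 ≤ g 0 := by
      rcases Nat.eq_zero_or_pos i0 with h0 | h0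
      · rw [h0]
      · exact le_of_lt (hg (by simpa using hr') (by simpa using hi0) h0)
    have hfle : f j0 ≤ f 0 := by
      rcases Nat.eq_zero_or_pos j0 with h0 | h0
      · rw [h0]
      · exact le_of_lt (hf (by simp) (by simpa using hj0) h0)
    have hfg0 : f 0 = g 0 := by omega
    have hsets : {x : ℕ | ∃ i, i < r ∧ x = f (i+1)} = {x : ℕ | ∃ i, i < r' - 1 ∧ x = g (i+1)} := by
      ext x
      simp only [Set.mem_setOf_eq]
      constructor
      · rintro ⟨i, hi, rfl⟩
        have hx : f (i+1) ∈ {x : ℕ | ∃ j, j < r' ∧ x = g j} := by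
          rw [← h]; exact ⟨i+1, by omega, rfl⟩
        obtain ⟨j, hj, hje⟩ := hx
        have hlt : f (i+1) < f 0 := hf (by simp) (by simp; omega) (by omega)
        have hjne : j ≠ 0 := by rintro rfl; omega
        exact ⟨j - 1, by omega, by rw [hje, Nat.sub_add_cancel (by omega : 1 ≤ j)]⟩
      · rintro ⟨j, hj, rfl⟩
        have hx : g (j+1) ∈ {x : ℕ | ∃ i, i < r + 1 ∧ x = f i} := by
          rw [h]; exact ⟨j+1, by omega, rfl⟩
        obtain ⟨i, hi, hie⟩ := hx
        have hlt : g (j+1) < g 0 := hg (by simpa using hr') (by simp; omega) (by omega)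
        have hine : i ≠ 0 := by rintro rfl; omega
        exact ⟨i - 1, by omega, by rw [hie, Nat.sub_add_cancel (by omega : 1 ≤ i)]⟩
    have hf' : StrictAntiOn (fun i => f (i+1)) (Set.Iio r) := by
      intro x hx y hy hxy
      simp only [Set.mem_Iio] at hx hy
      exact hf (by simp; omega) (by simp; omega) (by omega)
    have hg' : StrictAntiOn (fun i => g (i+1)) (Set.Iio (r' - 1)) := by
      intro x hx y hy hxy
      simp only [Set.mem_Iio] at hx hy
      exact hg (by simp; omega) (by simp; omega) (by omega)
    obtain ⟨hre, heq⟩ := ih (r' - 1) _ _ hf' hg' hsets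
    refine ⟨by omega, ?_⟩
    intro i hi
    rcases Nat.eq_zero_or_pos i with rfl | hpos
    · exact hfg0
    · have h2 := heq (i - 1) (by omega)
      simpa [Nat.sub_add_cancel hpos] using h2

lemma addAnti {b : ℕ → ℕ} {s : ℕ} (hb : StrictAntiOn b (Set.Iio s)) :
    ∀ j j', j' ≤ j → j < s → b j + j ≤ b j' + j' := by
  intro j
  induction j with
  | zero => intro j' hj' _; interval_cases j'; exact le_refl _
  | succ j ih =>
    intro j' hj' hjs
    rcases Nat.eq_or_lt_of_le hj' with rfl | hlt
    · exact le_refl _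
    · have h1 : b (j+1) < b j := hb (by simp; omega) (by simpa using hjs) (by omega)
      have h2 := ih j' (by omega) (by omega)
      omega

lemma ncard_shift {S : Set ℕ} (hfin : S.Finite)
    (hdc : ∀ j' j, j' ≤ j → j ∈ S → j' ∈ S) :
    Set.ncard {j | j + 1 ∈ S} = S.ncard - 1 := by
  have himg : (fun j => j + 1) '' {j | j + 1 ∈ S} = S \ {0} := by
    ext x
    simp only [Set.mem_image, Set.mem_setOf_eq, Set.mem_diff, Set.mem_singleton_iff]
    constructor
    · rintro ⟨j, hj, rfl⟩; exact ⟨hj, by omega⟩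
    · rintro ⟨hx, hx0⟩
      exact ⟨x - 1, by simpa [Nat.sub_add_cancel (by omega : 1 ≤ x)] using hx, by omega⟩
  have h1 : Set.ncard {j | j + 1 ∈ S} = (S \ {0}).ncard := by
    rw [← himg, Set.ncard_image_of_injective _ (add_left_injective 1)]
  rcases S.eq_empty_or_nonempty with rfl | ⟨x, hx⟩
  · rw [h1]; simp
  · have h0 : 0 ∈ S := hdc 0 x (Nat.zero_le x) hx
    rw [h1, Set.ncard_diff_singleton_of_mem h0]
theorem delete_largest_diagonal_hook (l lb μ μb : ℕ → ℕ)
    (hl : IsPartition l) (hsc : SelfConj l) (h0 : 0 < l 0)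
    (hlb : IsPartition lb) (hscb : SelfConj lb)
    (hD : Dset lb = Dset l \ {hookLen l 0 0})
    (hμ : IsPartition μ) (hμb : IsPartition μb)
    (hcorr : Corresponds l μ) (hcorrb : Corresponds lb μb) :
    (hookLen l 0 0 % 4 = 1 → ∀ i, μb i = μ (i + 1)) ∧
    (hookLen l 0 0 % 4 = 3 → ∀ i, μb i = μ i - 1) := by
  obtain ⟨r, s, a, b, ⟨ha, hb, hb1, hD1, hD3⟩, hφ1, hφ2⟩ := hcorr
  obtain ⟨r', s', a', b', ⟨ha', hb', hb1', hD1', hD3'⟩, hφ1', hφ2'⟩ := hcorrb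
  have hsc' : conj l = l := hsc
  have hmax : ∀ x ∈ Dset l, x ≤ hookLen l 0 0 := by
    rintro x ⟨i, hi, rfl⟩
    have hle : l i ≤ l 0 := hl.1 (Nat.zero_le i)
    simp only [hookLen, hsc']
    omega
  have hD1b : D1 lb = D1 l \ {hookLen l 0 0} := by
    simp only [D1, hD]
    ext x
    simp only [Set.mem_setOf_eq, Set.mem_diff, Set.mem_singleton_iff]
    tauto
  have hD3b : D3 lb = D3 l \ {hookLen l 0 0} := by
    simp only [D3, hD]
    ext x
    simp only [Set.mem_setOf_eq, Set.mem_diff, Set.mem_singleton_iff]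
    tauto
  constructor
  · -- δ ≡ 1 (mod 4)
    intro h1 i
    have hδD1 : hookLen l 0 0 ∈ D1 l := ⟨⟨0, h0, rfl⟩, h1⟩
    have hD3e : D3 lb = D3 l := by
      rw [hD3b]
      ext x
      simp only [Set.mem_diff, Set.mem_singleton_iff]
      constructor
      · exact fun h => h.1
      · intro hx
        refine ⟨hx, ?_⟩
        rintro rfl
        have h2 := hx.2
        omega
    rw [hD1] at hδD1
    obtain ⟨i0, hi0r, hi0e⟩ := hδD1
    have hr : 0 < r := by omega
    have ha00 : (4 * a 0 + 1) ∈ Dset l := by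
      have hm : (4 * a 0 + 1) ∈ D1 l := by rw [hD1]; exact ⟨0, hr, rfl⟩
      exact hm.1
    have ha0le := hmax _ ha00
    have hi00 : i0 = 0 := by
      by_contra hne
      have hlt : a i0 < a 0 := ha (by simp only [Set.mem_Iio]; omega)
        (by simp only [Set.mem_Iio]; omega) (by omega)
      omega
    subst hi00
    have hset1 : {x : ℕ | ∃ i, i < r' ∧ x = 4 * a' i + 1}
        = {x : ℕ | ∃ i, i < r - 1 ∧ x = 4 * a (i+1) + 1} := by
      rw [← hD1', hD1b, hD1, hi0e]
      ext x
      simp only [Set.mem_diff, Set.mem_setOf_eq, Set.mem_singleton_iff]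
      constructor
      · rintro ⟨⟨j, hj, rfl⟩, hne⟩
        have hj0 : j ≠ 0 := by rintro rfl; exact hne rfl
        exact ⟨j - 1, by omega, by rw [Nat.sub_add_cancel (by omega : 1 ≤ j)]⟩
      · rintro ⟨j, hj, rfl⟩
        refine ⟨⟨j+1, by omega, rfl⟩, ?_⟩
        intro hcontra
        have hlt : a (j+1) < a 0 := ha (by simp only [Set.mem_Iio]; omega)
          (by simp only [Set.mem_Iio]; omega) (by omega)
        omega
    have hset3 : {x : ℕ | ∃ j, j < s' ∧ x = 4 * b' j - 1}
        = {x : ℕ | ∃ j, j < s ∧ x = 4 * b j - 1} := by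
      rw [← hD3', hD3e, hD3]
    have hga' : StrictAntiOn (fun i => 4 * a' i + 1) (Set.Iio r') := by
      intro x hx y hy hxy
      have := ha' hx hy hxy
      show 4 * a' y + 1 < 4 * a' x + 1
      omega
    have hga2 : StrictAntiOn (fun i => 4 * a (i+1) + 1) (Set.Iio (r - 1)) := by
      intro x hx y hy hxy
      simp only [Set.mem_Iio] at hx hy
      have := ha (by simp only [Set.mem_Iio]; omega) (by simp only [Set.mem_Iio]; omega)
        (by omega : x + 1 < y + 1)
      show 4 * a (y+1) + 1 < 4 * a (x+1) + 1
      omega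
    have hgb' : StrictAntiOn (fun j => 4 * b' j - 1) (Set.Iio s') := by
      intro x hx y hy hxy
      simp only [Set.mem_Iio] at hx hy
      have h2 := hb' (by simp only [Set.mem_Iio]; omega) (by simp only [Set.mem_Iio]; omega) hxy
      have h4 := hb1' y hy
      show 4 * b' y - 1 < 4 * b' x - 1
      omega
    have hgb : StrictAntiOn (fun j => 4 * b j - 1) (Set.Iio s) := by
      intro x hx y hy hxy
      simp only [Set.mem_Iio] at hx hy
      have h2 := hb (by simp only [Set.mem_Iio]; omega) (by simp only [Set.mem_Iio]; omega) hxy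
      have h4 := hb1 y hy
      show 4 * b y - 1 < 4 * b x - 1
      omega
    obtain ⟨hrr, haeq0⟩ := enumUniq r' (r-1) _ _ hga' hga2 hset1
    obtain ⟨hss, hbeq0⟩ := enumUniq s' s _ _ hgb' hgb hset3
    have hbeq : ∀ j, j < s → b' j = b j := by
      intro j hj
      have h2 := hbeq0 j (by omega)
      have h4 := hb1' j (by omega)
      have h5 := hb1 j hj
      omega
    have haeq : ∀ i, i < r - 1 → a' i = a (i+1) := by
      intro i hi
      have h2 := haeq0 i (by omega)
      omega
    rcases lt_or_ge i (r - 1) with hi | hi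
    · have e1 := hφ1' i (by omega)
      have e2 := hφ1 (i+1) (by omega)
      rw [haeq i hi] at e1
      omega
    · have e1 := hφ2' i (by omega)
      have e2 := hφ2 (i+1) (by omega)
      rw [e1, e2]
      congr 1
      ext j
      simp only [Set.mem_setOf_eq]
      constructor
      · rintro ⟨hj, hc⟩
        rw [hbeq j (by omega)] at hc
        exact ⟨by omega, by omega⟩
      · rintro ⟨hj, hc⟩
        refine ⟨by omega, ?_⟩
        rw [hbeq j (by omega)]
        omega
  · -- δ ≡ 3 (mod 4)
    intro h3 i
    have hδD3 : hookLen l 0 0 ∈ D3 l := ⟨⟨0, h0, rfl⟩, h3⟩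
    have hD1e : D1 lb = D1 l := by
      rw [hD1b]
      ext x
      simp only [Set.mem_diff, Set.mem_singleton_iff]
      constructor
      · exact fun h => h.1
      · intro hx
        refine ⟨hx, ?_⟩
        rintro rfl
        have h2 := hx.2
        omega
    rw [hD3] at hδD3
    obtain ⟨j0, hj0s, hj0e⟩ := hδD3
    have hs : 0 < s := by omega
    have hb00 : (4 * b 0 - 1) ∈ Dset l := by
      have hm : (4 * b 0 - 1) ∈ D3 l := by rw [hD3]; exact ⟨0, hs, rfl⟩
      exact hm.1
    have hb0le := hmax _ hb00
    have hb1j0 := hb1 j0 hj0s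
    have hb10 := hb1 0 hs
    have hj00 : j0 = 0 := by
      by_contra hne
      have hlt : b j0 < b 0 := hb (by simp only [Set.mem_Iio]; omega)
        (by simp only [Set.mem_Iio]; omega) (by omega)
      omega
    subst hj00
    have hset1 : {x : ℕ | ∃ i, i < r' ∧ x = 4 * a' i + 1}
        = {x : ℕ | ∃ i, i < r ∧ x = 4 * a i + 1} := by
      rw [← hD1', hD1e, hD1]
    have hset3 : {x : ℕ | ∃ j, j < s' ∧ x = 4 * b' j - 1}
        = {x : ℕ | ∃ j, j < s - 1 ∧ x = 4 * b (j+1) - 1} := by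
      rw [← hD3', hD3b, hD3, hj0e]
      ext x
      simp only [Set.mem_diff, Set.mem_setOf_eq, Set.mem_singleton_iff]
      constructor
      · rintro ⟨⟨j, hj, rfl⟩, hne⟩
        have hj0 : j ≠ 0 := by rintro rfl; exact hne rfl
        exact ⟨j - 1, by omega, by rw [Nat.sub_add_cancel (by omega : 1 ≤ j)]⟩
      · rintro ⟨j, hj, rfl⟩
        refine ⟨⟨j+1, by omega, rfl⟩, ?_⟩
        intro hcontra
        have hlt : b (j+1) < b 0 := hb (by simp only [Set.mem_Iio]; omega)
          (by simp only [Set.mem_Iio]; omega) (by omega)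
        have hge := hb1 (j+1) (by omega)
        omega
    have hga' : StrictAntiOn (fun i => 4 * a' i + 1) (Set.Iio r') := by
      intro x hx y hy hxy
      have := ha' hx hy hxy
      show 4 * a' y + 1 < 4 * a' x + 1
      omega
    have hga : StrictAntiOn (fun i => 4 * a i + 1) (Set.Iio r) := by
      intro x hx y hy hxy
      have := ha hx hy hxy
      show 4 * a y + 1 < 4 * a x + 1
      omega
    have hgb' : StrictAntiOn (fun j => 4 * b' j - 1) (Set.Iio s') := by
      intro x hx y hy hxy
      simp only [Set.mem_Iio] at hx hy
      have h2 := hb' (by simp only [Set.mem_Iio]; omega) (by simp only [Set.mem_Iio]; omega) hxy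
      have h4 := hb1' y hy
      show 4 * b' y - 1 < 4 * b' x - 1
      omega
    have hgb2 : StrictAntiOn (fun j => 4 * b (j+1) - 1) (Set.Iio (s - 1)) := by
      intro x hx y hy hxy
      simp only [Set.mem_Iio] at hx hy
      have h2 := hb (by simp only [Set.mem_Iio]; omega) (by simp only [Set.mem_Iio]; omega)
        (by omega : x + 1 < y + 1)
      have h4 := hb1 (y+1) (by omega)
      show 4 * b (y+1) - 1 < 4 * b (x+1) - 1
      omega
    obtain ⟨hrr, haeq0⟩ := enumUniq r' r _ _ hga' hga hset1
    obtain ⟨hss, hbeq0⟩ := enumUniq s' (s-1) _ _ hgb' hgb2 hset3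
    have haeq : ∀ i, i < r → a' i = a i := by
      intro i hi
      have h2 := haeq0 i (by omega)
      omega
    have hbeq : ∀ j, j < s - 1 → b' j = b (j+1) := by
      intro j hj
      have h2 := hbeq0 j (by omega)
      have h4 := hb1' j (by omega)
      have h5 := hb1 (j+1) (by omega)
      omega
    rcases lt_or_ge i r with hi | hi
    · have e1 := hφ1' i (by omega)
      have e2 := hφ1 i hi
      rw [haeq i hi] at e1
      omega
    · have e1 := hφ2' i (by omega)
      have e2 := hφ2 i hi
      have hSfin : ({j | j < s ∧ i - r < b j + j - s} : Set ℕ).Finite :=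
        Set.Finite.subset (Set.finite_Iio s) (fun j hj => hj.1)
      have hSdc : ∀ j' j, j' ≤ j → j ∈ {j | j < s ∧ i - r < b j + j - s} →
          j' ∈ {j | j < s ∧ i - r < b j + j - s} := by
        rintro j' j hle ⟨hj, hc⟩
        have hmono := addAnti hb j j' hle hj
        exact ⟨by omega, by omega⟩
      have hset : {j | j < s' ∧ i - r' < b' j + j - s'}
          = {j | j + 1 ∈ {j | j < s ∧ i - r < b j + j - s}} := by
        ext j
        simp only [Set.mem_setOf_eq]
        constructor
        · rintro ⟨hj, hc⟩
          rw [hbeq j (by omega)] at hc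
          exact ⟨by omega, by omega⟩
        · rintro ⟨hj, hc⟩
          refine ⟨by omega, ?_⟩
          rw [hbeq j (by omega)]
          omega
      rw [e1, e2, hset, ncard_shift hSfin hSdc]
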